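/- Let X_1, X_2, ... be i.i.d. integrable random variables with mean zero and P(X_1 < -ε) > 0 for some ε > 0 with y = kε for an integer k ≥ 1. Define p_n(z) = P(max_{1≤j≤n} S_j^{(2)} < z) and q_n(z) = P(max_{1≤j≤n} S_j^{(2)} ≤ z), where S_j^{(2)} = ∑_{i=1}^j (j-i+1) X_i. Then for every n ≥ 1, p_n(0) ≥ [P(X_1 < -ε)]^k q_n(y). -/

import Mathlib

open MeasureTheory ProbabilityTheory Finset



/-- Auxiliary weighted-sum functional. -/
noncomputable def persistG2 (m j : ℕ) (v : Fin m → ℝ) : ℝ :=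
  ∑ i : Fin m, (if (i : ℕ) < j then ((j - (i : ℕ) : ℕ) : ℝ) else 0) * v i

lemma persistG2_measurable (m j : ℕ) : Measurable (persistG2 m j) :=
  Finset.measurable_sum _ fun i _ => measurable_const.mul (measurable_pi_apply i)

def persistM (m : ℕ) (w : ℝ) : Set (Fin m → ℝ) :=
  {v | ∀ j ∈ Finset.Icc 1 m, persistG2 m j v ≤ w}

lemma persistM_measurable (m : ℕ) (w : ℝ) : MeasurableSet (persistM m w) := by
  have h : persistM m w = ⋂ j ∈ Finset.Icc 1 m, {v | persistG2 m j v ≤ w} := by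
    ext v; simp [persistM]
  rw [h]
  exact MeasurableSet.biInter (Finset.Icc 1 m).countable_toSet fun j _ =>
    measurableSet_le (persistG2_measurable m j) measurable_const

lemma persistG2_comp (m j a : ℕ) (hj : j ≤ m) (x : ℕ → ℝ) :
    persistG2 m j (fun i => x ((i : ℕ) + a)) = ∑ i ∈ Finset.range j, ((j - i : ℕ) : ℝ) * x (i + a) := by
  unfold persistG2
  rw [Fin.sum_univ_eq_sum_range (fun i => (if i < j then ((j - i : ℕ) : ℝ) else 0) * x (i + a))]
  simp only [ite_mul, zero_mul]
  rw [← Finset.sum_filter]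
  congr 1
  ext i
  simp only [Finset.mem_filter, Finset.mem_range]
  omega

lemma persistSum_eq (j : ℕ) (x : ℕ → ℝ) :
    ∑ i ∈ Finset.Icc 1 j, ((j - i + 1 : ℕ) : ℝ) * x i
      = ∑ i ∈ Finset.range j, ((j - i : ℕ) : ℝ) * x (i + 1) := by
  have hmap : Finset.Icc 1 j
      = Finset.map ⟨fun i => i + 1, add_left_injective 1⟩ (Finset.range j) := by
    ext i
    simp only [Finset.mem_Icc, Finset.mem_map, Finset.mem_range, Function.Embedding.coeFn_mk]
    constructor
    · rintro ⟨h1, h2⟩; exact ⟨i - 1, by omega, by omega⟩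
    · rintro ⟨b, hb, rfl⟩; omega
  rw [hmap, Finset.sum_map]
  refine Finset.sum_congr rfl fun i hi => ?_
  rw [Finset.mem_range] at hi
  simp only [Function.Embedding.coeFn_mk]
  rw [show j - (i + 1) + 1 = j - i from by omega]

lemma persistSum_split (j : ℕ) (hj : 1 ≤ j) (x : ℕ → ℝ) :
    ∑ i ∈ Finset.Icc 1 j, ((j - i + 1 : ℕ) : ℝ) * x i
      = (j : ℝ) * x 1 + ∑ i ∈ Finset.range (j - 1), ((j - 1 - i : ℕ) : ℝ) * x (i + 2) := by
  rw [persistSum_eq]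
  obtain ⟨j', rfl⟩ : ∃ j', j = j' + 1 := ⟨j - 1, by omega⟩
  rw [Finset.sum_range_succ' (fun i => ((j' + 1 - i : ℕ) : ℝ) * x (i + 1))]
  have hterm : ∀ i ∈ Finset.range j',
      ((j' + 1 - (i + 1) : ℕ) : ℝ) * x (i + 1 + 1) = ((j' + 1 - 1 - i : ℕ) : ℝ) * x (i + 2) := by
    intro i hi
    rw [show j' + 1 - (i + 1) = j' + 1 - 1 - i from by omega]
  rw [Finset.sum_congr rfl hterm]
  simp only [Nat.sub_zero]
  norm_num
  exact add_comm _ _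

lemma persist_map_tuple_pi {Ω : Type*} [MeasureSpace Ω] [IsProbabilityMeasure (ℙ : Measure Ω)]
    (X : ℕ → Ω → ℝ) (hmeas : ∀ i, Measurable (X i))
    (hindep : iIndepFun X ℙ)
    (hid : ∀ i, IdentDistrib (X i) (X 1) ℙ ℙ) (m a : ℕ) :
    Measure.map (fun ω (i : Fin m) => X ((i : ℕ) + a) ω) ℙ
      = Measure.pi (fun _ : Fin m => Measure.map (X 1) ℙ) := by
  haveI : IsProbabilityMeasure (Measure.map (X 1) ℙ) :=
    Measure.isProbabilityMeasure_map (hmeas 1).aemeasurable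
  have hW : Measurable (fun ω (i : Fin m) => X ((i : ℕ) + a) ω) :=
    measurable_pi_lambda _ fun i => hmeas _
  refine (Measure.pi_eq fun s hs => ?_).symm
  rw [Measure.map_apply hW (MeasurableSet.univ_pi hs)]
  set sets : ℕ → Set ℝ := fun j => ⋂ (i : Fin m) (_ : (i : ℕ) + a = j), s i with hsets
  have hsetsm : ∀ j, MeasurableSet (sets j) := fun j =>
    MeasurableSet.iInter fun i => MeasurableSet.iInter fun _ => hs i
  have hsets_eq : ∀ i : Fin m, sets ((i : ℕ) + a) = s i := by
    intro i
    apply Set.Subset.antisymm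
    · intro x hx
      simp only [hsets, Set.mem_iInter] at hx
      exact hx i rfl
    · intro x hx
      simp only [hsets, Set.mem_iInter]
      intro i' hi'
      have : i' = i := Fin.ext (by omega)
      rwa [this]
  have hpre : (fun ω (i : Fin m) => X ((i : ℕ) + a) ω) ⁻¹' (Set.univ.pi s)
      = ⋂ j ∈ Finset.image (fun i : Fin m => (i : ℕ) + a) Finset.univ, X j ⁻¹' sets j := by
    ext ω
    simp only [Set.mem_preimage, Set.mem_pi, Set.mem_univ, forall_true_left, Set.mem_iInter,
      Finset.mem_image, Finset.mem_univ, true_and]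
    constructor
    · rintro h j ⟨i0, rfl⟩
      rw [hsets_eq i0]
      exact h i0
    · intro h i
      have := h ((i : ℕ) + a) ⟨i, rfl⟩
      rw [hsets_eq i] at this
      exact this
  rw [hpre, hindep.measure_inter_preimage_eq_mul _ (fun j _ => hsetsm j),
    Finset.prod_image (fun i _ i' _ h => Fin.ext (by omega))]
  refine Finset.prod_congr rfl fun i _ => ?_
  rw [hsets_eq i, ← Measure.map_apply (hmeas _) (hs i), (hid ((i : ℕ) + a)).map_eq]


/-- For i.i.d. integrable mean-zero variables with `P(X_1 < -ε) > 0`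
and `y = kε`, the persistence probabilities of the iterated partial sums satisfy
`p_n(0) ≥ [P(X_1 < -ε)]^k q_n(y)` for every `n ≥ 1`. -/
theorem iterated_persistence_level_comparison
    {Ω : Type*} [MeasureSpace Ω] [IsProbabilityMeasure (ℙ : Measure Ω)]
    (X : ℕ → Ω → ℝ) (hmeas : ∀ i, Measurable (X i))
    (hindep : iIndepFun X ℙ)
    (hid : ∀ i, IdentDistrib (X i) (X 1) ℙ ℙ)
    (hint : Integrable (X 1) ℙ)
    (hmean : ∫ ω, X 1 ω = 0)
    (ε : ℝ) (hε : 0 < ε) (hεpos : 0 < (ℙ {ω | X 1 ω < -ε}).toReal)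
    (k : ℕ) (hk : 1 ≤ k)
    (S2 : ℕ → Ω → ℝ)
    (hS2 : ∀ j ω, S2 j ω = ∑ i ∈ Finset.Icc 1 j, ((j - i + 1 : ℕ) : ℝ) * X i ω)
    (n : ℕ) (hn : 1 ≤ n) :
    ((ℙ {ω | X 1 ω < -ε}).toReal) ^ k
        * (ℙ {ω | ∀ j ∈ Finset.Icc 1 n, S2 j ω ≤ k * ε}).toReal
      ≤ (ℙ {ω | ∀ j ∈ Finset.Icc 1 n, S2 j ω < 0}).toReal := by
  set m := n - 1 with hm
  set c := (ℙ {ω | X 1 ω < -ε}).toReal with hc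
  have hc0 : 0 ≤ c := ENNReal.toReal_nonneg
  have hfin' : ∀ s : Set Ω, ℙ s ≠ ⊤ := fun s => measure_ne_top ℙ s
  -- the two tuple maps
  have hmap2 := persist_map_tuple_pi X hmeas hindep hid m 2
  have hmap1 := persist_map_tuple_pi X hmeas hindep hid m 1
  have hW2meas : Measurable (fun ω (i : Fin m) => X ((i : ℕ) + 2) ω) :=
    measurable_pi_lambda _ fun i => hmeas _
  have hW1meas : Measurable (fun ω (i : Fin m) => X ((i : ℕ) + 1) ω) :=
    measurable_pi_lambda _ fun i => hmeas _
  -- independence of X 1 from the shifted tuple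
  have hmem2 : ∀ i : Fin m, (i : ℕ) + 2 ∈ Finset.Icc 2 n := fun i =>
    Finset.mem_Icc.mpr ⟨by omega, by have := i.isLt; omega⟩
  have hXU : IndepFun (X 1) (fun ω (i : Fin m) => X ((i : ℕ) + 2) ω) ℙ := by
    have hdisj : Disjoint ({1} : Finset ℕ) (Finset.Icc 2 n) := by
      simp [Finset.disjoint_left]
    have hfin := hindep.indepFun_finset {1} (Finset.Icc 2 n) hdisj hmeas
    have hφ : Measurable (fun v : ({1} : Finset ℕ) → ℝ => v ⟨1, Finset.mem_singleton_self 1⟩) :=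
      measurable_pi_apply _
    have hψ : Measurable (fun v : (Finset.Icc 2 n : Finset ℕ) → ℝ =>
        fun i : Fin m => v ⟨(i : ℕ) + 2, hmem2 i⟩) :=
      measurable_pi_lambda _ fun i => measurable_pi_apply _
    exact hfin.comp hφ hψ
  -- product formula for the intersection
  have hprodE : ∀ w : ℝ,
      ℙ ({ω | X 1 ω < -ε} ∩ (fun ω (i : Fin m) => X ((i : ℕ) + 2) ω) ⁻¹' persistM m w)
        = ℙ {ω | X 1 ω < -ε}
          * ℙ ((fun ω (i : Fin m) => X ((i : ℕ) + 2) ω) ⁻¹' persistM m w) := fun w =>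
    hXU.measure_inter_preimage_eq_mul (Set.Iio (-ε)) (persistM m w)
      measurableSet_Iio (persistM_measurable m w)
  -- the two tuples have the same law
  have hUV : ∀ w : ℝ,
      ℙ ((fun ω (i : Fin m) => X ((i : ℕ) + 2) ω) ⁻¹' persistM m w)
        = ℙ ((fun ω (i : Fin m) => X ((i : ℕ) + 1) ω) ⁻¹' persistM m w) := by
    intro w
    rw [← Measure.map_apply hW2meas (persistM_measurable m w),
      ← Measure.map_apply hW1meas (persistM_measurable m w), hmap2, hmap1]
  -- identification of S2 with the functionals
  have hident : ∀ j, 1 ≤ j → j ≤ m → ∀ ω,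
      S2 j ω = persistG2 m j (fun i : Fin m => X ((i : ℕ) + 1) ω) := by
    intro j hj1 hjm ω
    rw [hS2, persistSum_eq j (fun i => X i ω), persistG2_comp m j 1 hjm (fun i => X i ω)]
  have hsplit : ∀ j, 1 ≤ j → j ≤ n → ∀ ω,
      S2 j ω = (j : ℝ) * X 1 ω + persistG2 m (j - 1) (fun i : Fin m => X ((i : ℕ) + 2) ω) := by
    intro j hj1 hjn ω
    rw [hS2, persistSum_split j hj1 (fun i => X i ω),
      persistG2_comp m (j - 1) 2 (by omega) (fun i => X i ω)]
  -- inclusion into the strict event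
  have hA : ∀ z : ℝ, 0 ≤ z →
      {ω | X 1 ω < -ε} ∩ (fun ω (i : Fin m) => X ((i : ℕ) + 2) ω) ⁻¹' persistM m (z + ε)
        ⊆ {ω | ∀ j ∈ Finset.Icc 1 n, S2 j ω < z} := by
    rintro z hz ω ⟨h1, h2⟩ j hj
    rw [Finset.mem_Icc] at hj
    obtain ⟨hj1, hjn⟩ := hj
    rw [hsplit j hj1 hjn ω]
    have h1' : X 1 ω < -ε := h1
    by_cases hcase : j = 1
    · subst hcase
      have h0 : persistG2 m 0 (fun i : Fin m => X ((i : ℕ) + 2) ω) = 0 := by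
        simp [persistG2]
      rw [show (1 : ℕ) - 1 = 0 from rfl, h0]
      push_cast
      linarith
    · have hj2 : 2 ≤ j := by omega
      have hmemj : j - 1 ∈ Finset.Icc 1 m := Finset.mem_Icc.mpr ⟨by omega, by omega⟩
      have h3 : persistG2 m (j - 1) (fun i : Fin m => X ((i : ℕ) + 2) ω) ≤ z + ε :=
        h2 (j - 1) hmemj
      have hjr : (1 : ℝ) ≤ (j : ℝ) := by exact_mod_cast hj1
      have hjX : (j : ℝ) * X 1 ω < (j : ℝ) * (-ε) :=
        mul_lt_mul_of_pos_left h1' (by linarith)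
      nlinarith [mul_nonneg (show (0 : ℝ) ≤ (j : ℝ) - 1 by linarith) hε.le]
  -- the weak event is contained in the tuple event
  have hBsub : ∀ w : ℝ, {ω | ∀ j ∈ Finset.Icc 1 n, S2 j ω ≤ w}
      ⊆ (fun ω (i : Fin m) => X ((i : ℕ) + 1) ω) ⁻¹' persistM m w := by
    intro w ω hω
    intro j hj
    rw [Finset.mem_Icc] at hj
    rw [← hident j hj.1 hj.2 ω]
    exact hω j (Finset.mem_Icc.mpr ⟨hj.1, by omega⟩)
  -- one-step inequality
  have step : ∀ z : ℝ, 0 ≤ z → ∀ w : ℝ, w ≤ z + ε →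
      c * (ℙ {ω | ∀ j ∈ Finset.Icc 1 n, S2 j ω ≤ w}).toReal
        ≤ (ℙ {ω | ∀ j ∈ Finset.Icc 1 n, S2 j ω < z}).toReal := by
    intro z hz w hw
    have hsub1 : {ω | ∀ j ∈ Finset.Icc 1 n, S2 j ω ≤ w}
        ⊆ (fun ω (i : Fin m) => X ((i : ℕ) + 1) ω) ⁻¹' persistM m (z + ε) := by
      refine Set.Subset.trans ?_ (hBsub (z + ε))
      intro ω hω j hj
      exact le_trans (hω j hj) hw
    calc c * (ℙ {ω | ∀ j ∈ Finset.Icc 1 n, S2 j ω ≤ w}).toReal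
        ≤ c * (ℙ ((fun ω (i : Fin m) => X ((i : ℕ) + 1) ω) ⁻¹' persistM m (z + ε))).toReal := by
          refine mul_le_mul_of_nonneg_left ?_ hc0
          exact ENNReal.toReal_mono (hfin' _) (measure_mono hsub1)
      _ = c * (ℙ ((fun ω (i : Fin m) => X ((i : ℕ) + 2) ω) ⁻¹' persistM m (z + ε))).toReal := by
          rw [hUV]
      _ = (ℙ ({ω | X 1 ω < -ε}
            ∩ (fun ω (i : Fin m) => X ((i : ℕ) + 2) ω) ⁻¹' persistM m (z + ε))).toReal := by
          rw [hprodE, ENNReal.toReal_mul]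
      _ ≤ (ℙ {ω | ∀ j ∈ Finset.Icc 1 n, S2 j ω < z}).toReal :=
          ENNReal.toReal_mono (hfin' _) (measure_mono (hA z hz))
  -- induction on k
  have main : ∀ K : ℕ, 1 ≤ K →
      c ^ K * (ℙ {ω | ∀ j ∈ Finset.Icc 1 n, S2 j ω ≤ (K : ℝ) * ε}).toReal
        ≤ (ℙ {ω | ∀ j ∈ Finset.Icc 1 n, S2 j ω < 0}).toReal := by
    refine Nat.le_induction ?_ ?_
    · rw [pow_one]
      exact step 0 le_rfl ((1 : ℕ) * ε) (by push_cast; linarith)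
    · intro K hK IH
      have hKε : (0 : ℝ) ≤ (K : ℝ) * ε := mul_nonneg (Nat.cast_nonneg K) hε.le
      have h1 : c * (ℙ {ω | ∀ j ∈ Finset.Icc 1 n, S2 j ω ≤ ((K + 1 : ℕ) : ℝ) * ε}).toReal
          ≤ (ℙ {ω | ∀ j ∈ Finset.Icc 1 n, S2 j ω < (K : ℝ) * ε}).toReal :=
        step ((K : ℝ) * ε) hKε _ (by push_cast; ring_nf; linarith)
      have h2 : (ℙ {ω | ∀ j ∈ Finset.Icc 1 n, S2 j ω < (K : ℝ) * ε}).toReal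
          ≤ (ℙ {ω | ∀ j ∈ Finset.Icc 1 n, S2 j ω ≤ (K : ℝ) * ε}).toReal := by
        refine ENNReal.toReal_mono (hfin' _) (measure_mono ?_)
        intro ω hω j hj
        exact le_of_lt (hω j hj)
      calc c ^ (K + 1) * (ℙ {ω | ∀ j ∈ Finset.Icc 1 n, S2 j ω ≤ ((K + 1 : ℕ) : ℝ) * ε}).toReal
          = c ^ K * (c * (ℙ {ω | ∀ j ∈ Finset.Icc 1 n, S2 j ω ≤ ((K + 1 : ℕ) : ℝ) * ε}).toReal) := by
            rw [pow_succ]; ring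
        _ ≤ c ^ K * (ℙ {ω | ∀ j ∈ Finset.Icc 1 n, S2 j ω < (K : ℝ) * ε}).toReal :=
            mul_le_mul_of_nonneg_left h1 (pow_nonneg hc0 K)
        _ ≤ c ^ K * (ℙ {ω | ∀ j ∈ Finset.Icc 1 n, S2 j ω ≤ (K : ℝ) * ε}).toReal :=
            mul_le_mul_of_nonneg_left h2 (pow_nonneg hc0 K)
        _ ≤ (ℙ {ω | ∀ j ∈ Finset.Icc 1 n, S2 j ω < 0}).toReal := IH
  exact main k hk
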